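/- Let [A,‖·‖_A] be a normed operator ideal. Then the injective hull of the composition ideal A∘H_v^∞ coincides, with equality of norms, with the composition ideal of the injective hull of A: [(A∘H_v^∞)^inj, ‖·‖_{(A∘H_v^∞)^inj}] = [A^inj∘H_v^∞, ‖·‖_{A^inj∘H_v^∞}]. In particular, the normed weighted holomorphic ideal [A^inj∘H_v^∞, ‖·‖_{A^inj∘H_v^∞}] is injective. -/

import Mathlib

open scoped ENNReal
open Set

noncomputable section

universe u v w

/-- A bundled complex Banach space. -/
structure BanachSp : Type (u + 1) where
  α : Type u
  [grp : NormedAddCommGroup α]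
  [mod : NormedSpace ℂ α]
  [cpl : CompleteSpace α]

attribute [instance] BanachSp.grp BanachSp.mod BanachSp.cpl

instance : CoeSort BanachSp (Type u) := ⟨BanachSp.α⟩

section Defs

variable {E : Type u} {F : Type v} [NormedAddCommGroup E] [NormedSpace ℂ E]
  [NormedAddCommGroup F] [NormedSpace ℂ F]

/-- `v` is a weight on `U`: continuous and strictly positive there. -/
def IsWeight (U : Set E) (v : E → ℝ) : Prop :=
  ContinuousOn v U ∧ ∀ x ∈ U, 0 < v x

/-- `f` belongs to `H_v^∞(U, F)`: holomorphic on `U` with `sup_{x ∈ U} v x * ‖f x‖ < ∞`. -/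
def HvBdd (U : Set E) (v : E → ℝ) (f : E → F) : Prop :=
  DifferentiableOn ℂ f U ∧ BddAbove ((fun x => v x * ‖f x‖) '' U)

/-- The weighted supremum norm `‖f‖_v = sup_{x ∈ U} v x * ‖f x‖`. -/
def hvNorm (U : Set E) (v : E → ℝ) (f : E → F) : ℝ :=
  sSup ((fun x => v x * ‖f x‖) '' U)

end Defs

section Iota

variable (F : Type u) [NormedAddCommGroup F] [NormedSpace ℂ F]

/-- The closed unit ball of the dual space `F*`. -/
def BallDual : Type u := {φ : StrongDual ℂ F // ‖φ‖ ≤ 1}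

instance : Nonempty (BallDual F) := ⟨⟨0, by simp⟩⟩

/-- `ℓ∞(B_{F*})`, the space of bounded scalar functions on the closed unit ball of `F*`. -/
abbrev Linf : Type u := lp (fun _ : BallDual F => ℂ) ∞

/-- The canonical embedding `ι_F : F → ℓ∞(B_{F*})`, `⟨ι_F y, φ⟩ = φ y`. -/
def iotaFun (y : F) : Linf F :=
  ⟨fun φ => φ.1 y, memℓp_infty ⟨‖y‖, by
    rintro r ⟨φ, rfl⟩
    calc ‖φ.1 y‖ ≤ ‖φ.1‖ * ‖y‖ := φ.1.le_opNorm y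
      _ ≤ 1 * ‖y‖ := by
          have := φ.2
          exact mul_le_mul_of_nonneg_right this (norm_nonneg y)
      _ = ‖y‖ := one_mul _⟩⟩

/-- The canonical embedding `ι_F : F → ℓ∞(B_{F*})` as a continuous linear map. -/
def iota : F →L[ℂ] Linf F :=
  LinearMap.mkContinuous
    { toFun := iotaFun F
      map_add' := by
        intro y z
        apply lp.ext
        rw [lp.coeFn_add]
        funext φ
        show φ.1 (y + z) = φ.1 y + φ.1 z
        exact map_add φ.1 y z
      map_smul' := by
        intro c y
        apply lp.ext
        rw [lp.coeFn_smul]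
        funext φ
        show φ.1 (c • y) = c • φ.1 y
        exact map_smul φ.1 c y }
    1 (by
      intro y
      rw [one_mul]
      refine lp.norm_le_of_forall_le (norm_nonneg y) fun φ => ?_
      calc ‖φ.1 y‖ ≤ ‖φ.1‖ * ‖y‖ := φ.1.le_opNorm y
        _ ≤ 1 * ‖y‖ := mul_le_mul_of_nonneg_right φ.2 (norm_nonneg y)
        _ = ‖y‖ := one_mul _)

/-- `ℓ∞(B_{F*})` as a bundled Banach space. -/
def LinfSp : BanachSp.{u} := ⟨Linf F⟩

end Iota

/-- An assignment of a class of weighted holomorphic mappings, together with a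
"norm" function, to every component `(U, v, F)`. -/
structure WHAssignment : Type (u + 1) where
  mem : ∀ (E : BanachSp.{u}) (U : Set E) (v : E → ℝ) (F : BanachSp.{u}), (E → F) → Prop
  nrm : ∀ (E : BanachSp.{u}) (U : Set E) (v : E → ℝ) (F : BanachSp.{u}), (E → F) → ℝ

/-- `[I, ‖·‖_I]` is a normed weighted holomorphic ideal. -/
structure IsNormedWHIdeal (I : WHAssignment.{u}) : Prop where
  mem_hv : ∀ (E : BanachSp.{u}) (U : Set E.α) (v : E.α → ℝ), IsOpen U → IsWeight U v →
    ∀ (F : BanachSp.{u}) (f : E.α → F.α), I.mem E U v F f → HvBdd U v f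
  zero_mem : ∀ (E : BanachSp.{u}) (U : Set E.α) (v : E.α → ℝ), IsOpen U → IsWeight U v →
    ∀ (F : BanachSp.{u}), I.mem E U v F (fun _ => 0)
  add_mem : ∀ (E : BanachSp.{u}) (U : Set E.α) (v : E.α → ℝ), IsOpen U → IsWeight U v →
    ∀ (F : BanachSp.{u}) (f g : E.α → F.α), I.mem E U v F f → I.mem E U v F g →
      I.mem E U v F (fun x => f x + g x)
  smul_mem : ∀ (E : BanachSp.{u}) (U : Set E.α) (v : E.α → ℝ), IsOpen U → IsWeight U v →
    ∀ (F : BanachSp.{u}) (c : ℂ) (f : E.α → F.α), I.mem E U v F f →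
      I.mem E U v F (fun x => c • f x)
  nrm_nonneg : ∀ (E : BanachSp.{u}) (U : Set E.α) (v : E.α → ℝ), IsOpen U → IsWeight U v →
    ∀ (F : BanachSp.{u}) (f : E.α → F.α), I.mem E U v F f → 0 ≤ I.nrm E U v F f
  nrm_eq_zero : ∀ (E : BanachSp.{u}) (U : Set E.α) (v : E.α → ℝ), IsOpen U → IsWeight U v →
    ∀ (F : BanachSp.{u}) (f : E.α → F.α), I.mem E U v F f → I.nrm E U v F f = 0 →
      ∀ x ∈ U, f x = 0
  nrm_add_le : ∀ (E : BanachSp.{u}) (U : Set E.α) (v : E.α → ℝ), IsOpen U → IsWeight U v →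
    ∀ (F : BanachSp.{u}) (f g : E.α → F.α), I.mem E U v F f → I.mem E U v F g →
      I.nrm E U v F (fun x => f x + g x) ≤ I.nrm E U v F f + I.nrm E U v F g
  nrm_smul : ∀ (E : BanachSp.{u}) (U : Set E.α) (v : E.α → ℝ), IsOpen U → IsWeight U v →
    ∀ (F : BanachSp.{u}) (c : ℂ) (f : E.α → F.α), I.mem E U v F f →
      I.nrm E U v F (fun x => c • f x) = ‖c‖ * I.nrm E U v F f
  hv_le_nrm : ∀ (E : BanachSp.{u}) (U : Set E.α) (v : E.α → ℝ), IsOpen U → IsWeight U v →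
    ∀ (F : BanachSp.{u}) (f : E.α → F.α), I.mem E U v F f →
      hvNorm U v f ≤ I.nrm E U v F f
  unit_mem : ∀ (E : BanachSp.{u}) (U : Set E.α) (v : E.α → ℝ), IsOpen U → IsWeight U v →
    ∀ (F : BanachSp.{u}) (h : E.α → ℂ), HvBdd U v h → ∀ y : F.α,
      I.mem E U v F (fun x => h x • y) ∧
        I.nrm E U v F (fun x => h x • y) = hvNorm U v h * ‖y‖
  comp_mem : ∀ (E : BanachSp.{u}) (U : Set E.α) (v : E.α → ℝ), IsOpen U → IsWeight U v →
    ∀ (V : Set E.α), IsOpen V → V ⊆ U →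
    ∀ h : E.α → E.α, DifferentiableOn ℂ h V → Set.MapsTo h V U →
    ∀ c : ℝ, 0 ≤ c → (∀ x ∈ V, v x ≤ c * v (h x)) →
    ∀ (F G : BanachSp.{u}) (T : F.α →L[ℂ] G.α) (f : E.α → F.α), I.mem E U v F f →
      I.mem E V v G (fun x => T (f (h x))) ∧
        I.nrm E V v G (fun x => T (f (h x))) ≤ ‖T‖ * I.nrm E U v F f * c

/-- `[I, ‖·‖_I]` is a Banach weighted holomorphic ideal: a normed one with complete components. -/
structure IsBanachWHIdeal (I : WHAssignment.{u}) extends IsNormedWHIdeal I : Prop where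
  complete : ∀ (E : BanachSp.{u}) (U : Set E.α) (v : E.α → ℝ), IsOpen U → IsWeight U v →
    ∀ (F : BanachSp.{u}) (f : ℕ → E.α → F.α), (∀ n, I.mem E U v F (f n)) →
      (∀ ε : ℝ, 0 < ε → ∃ N : ℕ, ∀ m ≥ N, ∀ n ≥ N,
        I.nrm E U v F (fun x => f m x - f n x) < ε) →
      ∃ g : E.α → F.α, I.mem E U v F g ∧
        ∀ ε : ℝ, 0 < ε → ∃ N : ℕ, ∀ n ≥ N, I.nrm E U v F (fun x => f n x - g x) < ε

/-- Injectivity of a normed weighted holomorphic ideal. -/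
def WHInjective (I : WHAssignment.{u}) : Prop :=
  ∀ (E : BanachSp.{u}) (U : Set E.α) (v : E.α → ℝ), IsOpen U → IsWeight U v →
  ∀ (F G : BanachSp.{u}) (f : E.α → F.α), HvBdd U v f →
  ∀ ι : F.α →ₗᵢ[ℂ] G.α, I.mem E U v G (fun x => ι (f x)) →
    I.mem E U v F f ∧ I.nrm E U v F f = I.nrm E U v G (fun x => ι (f x))

/-- The injective hull `[I^inj, ‖·‖_{I^inj}]` of a weighted holomorphic ideal. -/
def whInj (I : WHAssignment.{u}) : WHAssignment.{u} where
  mem E U v F f := HvBdd U v f ∧ I.mem E U v (LinfSp F.α) (fun x => iota F.α (f x))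
  nrm E U v F f := I.nrm E U v (LinfSp F.α) (fun x => iota F.α (f x))

/-- The order relation `[I, ‖·‖_I] ≤ [J, ‖·‖_J]` between weighted holomorphic ideals. -/
def WHle (I J : WHAssignment.{u}) : Prop :=
  ∀ (E : BanachSp.{u}) (U : Set E.α) (v : E.α → ℝ), IsOpen U → IsWeight U v →
  ∀ (F : BanachSp.{u}) (f : E.α → F.α), I.mem E U v F f →
    J.mem E U v F f ∧ J.nrm E U v F f ≤ I.nrm E U v F f

/-- The domination property: `‖Σ λᵢ v(xᵢ) f(xᵢ)‖ ≤ ‖Σ λᵢ v(xᵢ) g(xᵢ)‖` for all finite families. -/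
def Dominates {E : Type u} {F : Type v} {G : Type w} [NormedAddCommGroup E] [NormedSpace ℂ E]
    [NormedAddCommGroup F] [NormedSpace ℂ F] [NormedAddCommGroup G] [NormedSpace ℂ G]
    (U : Set E) (v : E → ℝ) (f : E → F) (g : E → G) : Prop :=
  ∀ (n : ℕ) (lam : Fin n → ℂ) (x : Fin n → E), (∀ i, x i ∈ U) →
    ‖∑ i, lam i • v (x i) • f (x i)‖ ≤ ‖∑ i, lam i • v (x i) • g (x i)‖


/-- An assignment of a class of operators and a "norm" to every pair of Banach spaces. -/
structure OpAssignment : Type (u + 1) where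
  mem : ∀ (E F : BanachSp.{u}), (E.α →L[ℂ] F.α) → Prop
  nrm : ∀ (E F : BanachSp.{u}), (E.α →L[ℂ] F.α) → ℝ

/-- `A` is an operator ideal (no norm conditions). -/
structure IsOpIdeal (A : OpAssignment.{u}) : Prop where
  zero_mem : ∀ (E F : BanachSp.{u}), A.mem E F 0
  add_mem : ∀ (E F : BanachSp.{u}) (S T : E.α →L[ℂ] F.α),
    A.mem E F S → A.mem E F T → A.mem E F (S + T)
  rank_one_mem : ∀ (E F : BanachSp.{u}) (φ : E.α →L[ℂ] ℂ) (y : F.α),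
    A.mem E F (φ.smulRight y)
  comp_mem : ∀ (E₀ E F F₀ : BanachSp.{u}) (R : E₀.α →L[ℂ] E.α) (T : E.α →L[ℂ] F.α)
    (S : F.α →L[ℂ] F₀.α), A.mem E F T → A.mem E₀ F₀ ((S.comp T).comp R)

/-- `[A, ‖·‖_A]` is a normed operator ideal in the sense of Pietsch. -/
structure IsNormedOpIdeal (A : OpAssignment.{u}) : Prop where
  zero_mem : ∀ (E F : BanachSp.{u}), A.mem E F 0
  add_mem : ∀ (E F : BanachSp.{u}) (S T : E.α →L[ℂ] F.α),
    A.mem E F S → A.mem E F T → A.mem E F (S + T)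
  smul_mem : ∀ (E F : BanachSp.{u}) (c : ℂ) (T : E.α →L[ℂ] F.α),
    A.mem E F T → A.mem E F (c • T)
  nrm_nonneg : ∀ (E F : BanachSp.{u}) (T : E.α →L[ℂ] F.α), A.mem E F T → 0 ≤ A.nrm E F T
  nrm_add_le : ∀ (E F : BanachSp.{u}) (S T : E.α →L[ℂ] F.α), A.mem E F S → A.mem E F T →
    A.nrm E F (S + T) ≤ A.nrm E F S + A.nrm E F T
  nrm_smul : ∀ (E F : BanachSp.{u}) (c : ℂ) (T : E.α →L[ℂ] F.α), A.mem E F T →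
    A.nrm E F (c • T) = ‖c‖ * A.nrm E F T
  op_le_nrm : ∀ (E F : BanachSp.{u}) (T : E.α →L[ℂ] F.α), A.mem E F T → ‖T‖ ≤ A.nrm E F T
  rank_one_mem : ∀ (E F : BanachSp.{u}) (φ : E.α →L[ℂ] ℂ) (y : F.α),
    A.mem E F (φ.smulRight y) ∧ A.nrm E F (φ.smulRight y) = ‖φ‖ * ‖y‖
  comp_mem : ∀ (E₀ E F F₀ : BanachSp.{u}) (R : E₀.α →L[ℂ] E.α) (T : E.α →L[ℂ] F.α)
    (S : F.α →L[ℂ] F₀.α), A.mem E F T → A.mem E₀ F₀ ((S.comp T).comp R) ∧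
      A.nrm E₀ F₀ ((S.comp T).comp R) ≤ ‖S‖ * A.nrm E F T * ‖R‖

/-- `[A, ‖·‖_A]` is a Banach operator ideal. -/
structure IsBanachOpIdeal (A : OpAssignment.{u}) extends IsNormedOpIdeal A : Prop where
  complete : ∀ (E F : BanachSp.{u}) (T : ℕ → (E.α →L[ℂ] F.α)), (∀ n, A.mem E F (T n)) →
    (∀ ε : ℝ, 0 < ε → ∃ N : ℕ, ∀ m ≥ N, ∀ n ≥ N, A.nrm E F (T m - T n) < ε) →
    ∃ S, A.mem E F S ∧ ∀ ε : ℝ, 0 < ε → ∃ N : ℕ, ∀ n ≥ N, A.nrm E F (T n - S) < ε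

/-- Injectivity of a normed operator ideal. -/
def OpInjective (A : OpAssignment.{u}) : Prop :=
  ∀ (E F G : BanachSp.{u}) (ι : F.α →ₗᵢ[ℂ] G.α) (T : E.α →L[ℂ] F.α),
    A.mem E G (ι.toContinuousLinearMap.comp T) →
      A.mem E F T ∧ A.nrm E F T = A.nrm E G (ι.toContinuousLinearMap.comp T)

/-- The injective hull `[A^inj, ‖·‖_{A^inj}]` of an operator ideal. -/
def opInj (A : OpAssignment.{u}) : OpAssignment.{u} where
  mem E F T := A.mem E (LinfSp F.α) ((iota F.α).comp T)
  nrm E F T := A.nrm E (LinfSp F.α) ((iota F.α).comp T)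

/-- The closure `\bar{A}` of an operator ideal, under the operator norm. -/
def opClosure (A : OpAssignment.{u}) : OpAssignment.{u} where
  mem E F T := ∀ ε : ℝ, 0 < ε → ∃ S, A.mem E F S ∧ ‖T - S‖ ≤ ε
  nrm E F T := ‖T‖

/-- The composition ideal `[A ∘ H_v^∞, ‖·‖_{A ∘ H_v^∞}]`. -/
def compWH (A : OpAssignment.{u}) : WHAssignment.{u} where
  mem E U v F f := ∃ (G : BanachSp.{u}) (T : G.α →L[ℂ] F.α) (g : E.α → G.α),
    A.mem G F T ∧ HvBdd U v g ∧ ∀ x ∈ U, f x = T (g x)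
  nrm E U v F f := sInf {r | ∃ (G : BanachSp.{u}) (T : G.α →L[ℂ] F.α) (g : E.α → G.α),
    A.mem G F T ∧ HvBdd U v g ∧ (∀ x ∈ U, f x = T (g x)) ∧ r = A.nrm G F T * hvNorm U v g}

/-- The closure of a weighted holomorphic ideal in `(H_v^∞, ‖·‖_v)`. -/
def whClosure (I : WHAssignment.{u}) : WHAssignment.{u} where
  mem E U v F f := HvBdd U v f ∧ ∀ ε : ℝ, 0 < ε → ∃ g : E.α → F.α,
    I.mem E U v F g ∧ ∀ x ∈ U, v x * ‖f x - g x‖ ≤ ε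
  nrm E U v F f := hvNorm U v f



section AuxLemmas

open Filter Asymptotics Topology

lemma norm_iota (F : Type u) [NormedAddCommGroup F] [NormedSpace ℂ F] (y : F) :
    ‖iota F y‖ = ‖y‖ := by
  refine le_antisymm (lp.norm_le_of_forall_le (norm_nonneg y) fun φ => ?_) ?_
  · calc ‖φ.1 y‖ ≤ ‖φ.1‖ * ‖y‖ := φ.1.le_opNorm y
      _ ≤ 1 * ‖y‖ := mul_le_mul_of_nonneg_right φ.2 (norm_nonneg y)
      _ = ‖y‖ := one_mul _
  · rcases eq_or_ne y 0 with rfl | hy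
    · simp only [map_zero, norm_zero, le_refl]
    · obtain ⟨gφ, hg1, hgy⟩ := exists_dual_vector ℂ y (norm_ne_zero_iff.mpr hy)
      have h1 : ‖(iota F y) (⟨gφ, hg1.le⟩ : BallDual F)‖ ≤ ‖iota F y‖ :=
        lp.norm_apply_le_norm ENNReal.top_ne_zero _ _
      have h2 : (iota F y) (⟨gφ, hg1.le⟩ : BallDual F) = gφ y := rfl
      rw [h2, hgy] at h1
      rwa [RCLike.norm_ofReal, abs_norm] at h1

/-- `ι_F` as a linear isometry. -/
def iotaIso (F : Type u) [NormedAddCommGroup F] [NormedSpace ℂ F] : F →ₗᵢ[ℂ] Linf F :=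
  ⟨(iota F).toLinearMap, norm_iota F⟩

@[simp] lemma iotaIso_apply (F : Type u) [NormedAddCommGroup F] [NormedSpace ℂ F] (y : F) :
    iotaIso F y = iota F y := rfl

lemma hvNorm_nonneg {E : Type u} [NormedAddCommGroup E] [NormedSpace ℂ E]
    {U : Set E} {v : E → ℝ} (hv : IsWeight U v) {F : Type v} [NormedAddCommGroup F]
    [NormedSpace ℂ F] (f : E → F) : 0 ≤ hvNorm U v f := by
  refine Real.sSup_nonneg ?_
  rintro r ⟨x, hx, rfl⟩
  exact mul_nonneg (hv.2 x hx).le (norm_nonneg _)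

lemma hvBdd_of_comp {E : Type u} [NormedAddCommGroup E] [NormedSpace ℂ E]
    {U : Set E} {v : E → ℝ} (hv : IsWeight U v) {G F : Type v} [NormedAddCommGroup G]
    [NormedSpace ℂ G] [NormedAddCommGroup F] [NormedSpace ℂ F]
    (T : G →L[ℂ] F) {g : E → G} (hg : HvBdd U v g) {f : E → F}
    (hfx : ∀ x ∈ U, f x = T (g x)) : HvBdd U v f := by
  constructor
  · exact (T.differentiable.comp_differentiableOn hg.1).congr hfx
  · obtain ⟨C, hC⟩ := hg.2
    refine ⟨‖T‖ * C, ?_⟩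
    rintro r ⟨x, hx, rfl⟩
    have h1 : v x * ‖f x‖ ≤ ‖T‖ * (v x * ‖g x‖) := by
      rw [hfx x hx]
      calc v x * ‖T (g x)‖ ≤ v x * (‖T‖ * ‖g x‖) :=
            mul_le_mul_of_nonneg_left (T.le_opNorm _) (hv.2 x hx).le
        _ = ‖T‖ * (v x * ‖g x‖) := by ring
    exact h1.trans (mul_le_mul_of_nonneg_left (hC ⟨x, hx, rfl⟩) (norm_nonneg T))

/-- Hahn–Banach extension of a norm-one map into `ℓ∞(B_{W*})` along a linear isometry. -/
lemma exists_extension {F Z : Type u} [NormedAddCommGroup F] [NormedSpace ℂ F]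
    [NormedAddCommGroup Z] [NormedSpace ℂ Z] (W : Type u) [NormedAddCommGroup W]
    [NormedSpace ℂ W] (κ : F →ₗᵢ[ℂ] Z) (u : F →L[ℂ] Linf W) (hu : ∀ y, ‖u y‖ ≤ ‖y‖) :
    ∃ P : Z →L[ℂ] Linf W, ‖P‖ ≤ 1 ∧ ∀ y, P (κ y) = u y := by
  classical
  set p : Subspace ℂ Z := LinearMap.range κ.toLinearMap with hp
  have key : ∀ ψ : BallDual W, ∃ Φ : Z →L[ℂ] ℂ, ‖Φ‖ ≤ 1 ∧ ∀ y : F, Φ (κ y) = (u y) ψ := by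
    intro ψ
    let φlin : F →ₗ[ℂ] ℂ :=
      { toFun := fun y => (u y) ψ
        map_add' := fun y z => by
          show (u (y + z)) ψ = (u y) ψ + (u z) ψ
          rw [map_add]
          exact congrFun (lp.coeFn_add (u y) (u z)) ψ
        map_smul' := fun c y => by
          show (u (c • y)) ψ = c • (u y) ψ
          rw [map_smul]
          exact congrFun (lp.coeFn_smul c (u y)) ψ }
    have hφb : ∀ y : F, ‖φlin y‖ ≤ 1 * ‖y‖ := fun y => by
      rw [one_mul]
      exact (lp.norm_apply_le_norm ENNReal.top_ne_zero (u y) ψ).trans (hu y)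
    let φ : F →L[ℂ] ℂ := LinearMap.mkContinuous φlin 1 hφb
    let e : F ≃ₗᵢ[ℂ] p := κ.equivRange
    let φp : p →L[ℂ] ℂ := φ.comp e.symm.toLinearIsometry.toContinuousLinearMap
    have hφp : ∀ z : p, ‖φp z‖ ≤ 1 * ‖z‖ := fun z => by
      have h1 : ‖φ (e.symm z)‖ ≤ 1 * ‖e.symm z‖ := hφb (e.symm z)
      rwa [e.symm.norm_map z] at h1
    obtain ⟨Φ, hΦext, hΦnorm⟩ := exists_extension_norm_eq p φp
    refine ⟨Φ, ?_, ?_⟩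
    · rw [hΦnorm]
      exact ContinuousLinearMap.opNorm_le_bound _ zero_le_one hφp
    · intro y
      have h1 : ((e y : p) : Z) = κ y := by
        simp [e, LinearIsometry.equivRange]; rfl
      have h2 := hΦext (e y)
      rw [h1] at h2
      rw [h2]
      show φ (e.symm (e y)) = (u y) ψ
      rw [e.symm_apply_apply]
      rfl
  choose Φs hΦs1 hΦs2 using key
  have hmem : ∀ z : Z, Memℓp (fun ψ : BallDual W => Φs ψ z) ∞ := by
    intro z
    apply memℓp_infty
    refine ⟨‖z‖, ?_⟩
    rintro r ⟨ψ, rfl⟩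
    calc ‖Φs ψ z‖ ≤ ‖Φs ψ‖ * ‖z‖ := (Φs ψ).le_opNorm z
      _ ≤ 1 * ‖z‖ := mul_le_mul_of_nonneg_right (hΦs1 ψ) (norm_nonneg z)
      _ = ‖z‖ := one_mul _
  let Plin : Z →ₗ[ℂ] Linf W :=
    { toFun := fun z => ⟨fun ψ => Φs ψ z, hmem z⟩
      map_add' := fun a b => by
        apply lp.ext
        rw [lp.coeFn_add]
        funext ψ
        exact map_add (Φs ψ) a b
      map_smul' := fun c a => by
        apply lp.ext
        rw [lp.coeFn_smul]
        funext ψ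
        exact map_smul (Φs ψ) c a }
  have hPb : ∀ z : Z, ‖Plin z‖ ≤ 1 * ‖z‖ := fun z => by
    rw [one_mul]
    refine lp.norm_le_of_forall_le (norm_nonneg z) fun ψ => ?_
    calc ‖Φs ψ z‖ ≤ ‖Φs ψ‖ * ‖z‖ := (Φs ψ).le_opNorm z
      _ ≤ 1 * ‖z‖ := mul_le_mul_of_nonneg_right (hΦs1 ψ) (norm_nonneg z)
      _ = ‖z‖ := one_mul _
  refine ⟨LinearMap.mkContinuous Plin 1 hPb, LinearMap.mkContinuous_norm_le _ zero_le_one _, ?_⟩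
  intro y
  apply lp.ext
  funext ψ
  exact hΦs2 ψ y

/-- Restriction of a factorization through the closed span of the image,
pulling the operator back through a linear isometry. -/
lemma exists_restriction {E : Type u} [NormedAddCommGroup E] [NormedSpace ℂ E]
    {U : Set E} {v : E → ℝ} (hU : IsOpen U)
    (F Z H : BanachSp.{u}) (κ : F.α →ₗᵢ[ℂ] Z.α) (T : H.α →L[ℂ] Z.α)
    {g : E → H.α} (hg : HvBdd U v g) {f : E → F.α} (hfx : ∀ x ∈ U, κ (f x) = T (g x)) :
    ∃ (H₀ : BanachSp.{u}) (j : H₀.α →L[ℂ] H.α) (S : H₀.α →L[ℂ] F.α) (g₀ : E → H₀.α),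
      ‖j‖ ≤ 1 ∧ (∀ z, κ (S z) = T (j z)) ∧ HvBdd U v g₀ ∧
        hvNorm U v g₀ = hvNorm U v g ∧ ∀ x ∈ U, f x = S (g₀ x) := by
  classical
  set M : Submodule ℂ H.α := (Submodule.span ℂ (g '' U)).topologicalClosure with hMdef
  have hMclosed : IsClosed (M : Set H.α) := Submodule.isClosed_topologicalClosure _
  haveI : CompleteSpace M := hMclosed.completeSpace_coe
  have hmemM : ∀ x ∈ U, g x ∈ M := fun x hx =>
    Submodule.le_topologicalClosure _ (Submodule.subset_span ⟨x, hx, rfl⟩)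
  have hκclosed : IsClosed (Set.range κ) := κ.isometry.isClosedEmbedding.isClosed_range
  set N : Submodule ℂ H.α := (LinearMap.range κ.toLinearMap).comap (T : H.α →ₗ[ℂ] Z.α)
    with hNdef
  have hNclosed : IsClosed (N : Set H.α) := by
    have hNset : (N : Set H.α) = T ⁻¹' (Set.range κ) := by
      ext h
      simp only [hNdef, Submodule.mem_comap, SetLike.mem_coe, LinearMap.mem_range,
        Set.mem_preimage, Set.mem_range, ContinuousLinearMap.coe_coe]
      rfl
    rw [hNset]
    exact hκclosed.preimage T.continuous
  have hMN : M ≤ N := by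
    refine Submodule.topologicalClosure_minimal _ (Submodule.span_le.2 ?_) hNclosed
    rintro _ ⟨x, hx, rfl⟩
    show T (g x) ∈ LinearMap.range κ.toLinearMap
    rw [← hfx x hx]
    exact ⟨f x, rfl⟩
  have hex : ∀ z : M, ∃ y : F.α, κ y = T (z : H.α) := by
    intro z
    obtain ⟨y, hy⟩ := (hMN z.2 : (z : H.α) ∈ N)
    exact ⟨y, hy⟩
  choose Sf hSf using hex
  have hSadd : ∀ a b : M, Sf (a + b) = Sf a + Sf b := fun a b =>
    κ.injective (by simp only [hSf, map_add, Submodule.coe_add])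
  have hSsmul : ∀ (c : ℂ) (a : M), Sf (c • a) = c • Sf a := fun c a =>
    κ.injective (by simp only [hSf, map_smul, Submodule.coe_smul])
  let Slin : M →ₗ[ℂ] F.α :=
    { toFun := Sf
      map_add' := hSadd
      map_smul' := hSsmul }
  have hSb : ∀ z : M, ‖Slin z‖ ≤ ‖T‖ * ‖z‖ := fun z => by
    have h1 : ‖κ (Sf z)‖ = ‖Sf z‖ := κ.norm_map _
    have h2 : ‖(z : H.α)‖ = ‖z‖ := rfl
    calc ‖Slin z‖ = ‖κ (Sf z)‖ := h1.symm
      _ = ‖T (z : H.α)‖ := by rw [hSf]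
      _ ≤ ‖T‖ * ‖(z : H.α)‖ := T.le_opNorm _
      _ = ‖T‖ * ‖z‖ := by rw [h2]
  let S : M →L[ℂ] F.α := LinearMap.mkContinuous Slin ‖T‖ hSb
  have hjle : ‖M.subtypeL‖ ≤ 1 :=
    ContinuousLinearMap.opNorm_le_bound _ zero_le_one fun z => by
      rw [one_mul]; rfl
  set g₀ : E → M := fun x => if h : g x ∈ M then (⟨g x, h⟩ : M) else 0 with hg₀def
  have hg₀U : ∀ x ∈ U, ((g₀ x : M) : H.α) = g x := fun x hx => by
    rw [hg₀def]; simp only [dif_pos (hmemM x hx)]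
  have hdiff : DifferentiableOn ℂ g₀ U := by
    intro x hx
    have hgx : DifferentiableAt ℂ g x := hg.1.differentiableAt (hU.mem_nhds hx)
    have hD := hgx.hasFDerivAt
    set D := fderiv ℂ g x with hDdef
    have hDmem : ∀ w : E, D w ∈ M := by
      intro w
      have hline : HasDerivAt (fun t : ℂ => x + t • w) w 0 := by
        simpa using ((hasDerivAt_id (0 : ℂ)).smul_const w).const_add x
      have hD' : HasFDerivAt g D ((fun t : ℂ => x + t • w) 0) := by
        simpa using hD
      have hcomp : HasDerivAt (g ∘ fun t : ℂ => x + t • w) (D w) 0 :=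
        hD'.comp_hasDerivAt 0 hline
      have htend := hasDerivAt_iff_tendsto_slope.mp hcomp
      refine hMclosed.mem_of_tendsto htend ?_
      have hcont : Continuous (fun t : ℂ => x + t • w) := by fun_prop
      have hev : ∀ᶠ t in 𝓝 (0 : ℂ), x + t • w ∈ U := by
        have h0 : x + (0 : ℂ) • w ∈ U := by simpa using hx
        exact (hcont.tendsto 0).eventually_mem (hU.mem_nhds h0)
      filter_upwards [hev.filter_mono nhdsWithin_le_nhds] with t ht
      have h1 : (g ∘ fun t : ℂ => x + t • w) t ∈ M := hmemM _ ht
      have h0 : (g ∘ fun t : ℂ => x + t • w) 0 ∈ M := hmemM _ (by simpa using hx)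
      simp only [slope, vsub_eq_sub]
      exact M.smul_mem _ (M.sub_mem h1 h0)
    set D₀ := D.codRestrict M hDmem with hD₀def
    have hfd : HasFDerivAt g₀ D₀ x := by
      refine HasFDerivAt.of_isLittleO ?_
      have h1 := hD.isLittleO
      rw [← isLittleO_norm_left] at h1 ⊢
      refine h1.congr' ?_ (Filter.EventuallyEq.refl _ _)
      filter_upwards [hU.mem_nhds hx] with y hy
      have hcoe : ((g₀ y - g₀ x - D₀ (y - x) : M) : H.α) = g y - g x - D (y - x) := by
        push_cast
        rw [hg₀U y hy, hg₀U x hx]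
        rfl
      show ‖g y - g x - D (y - x)‖ = ‖g₀ y - g₀ x - D₀ (y - x)‖
      rw [← hcoe]
      rfl
    exact hfd.differentiableAt.differentiableWithinAt
  have himg : (fun x => v x * ‖g₀ x‖) '' U = (fun x => v x * ‖g x‖) '' U := by
    refine Set.image_congr fun x hx => ?_
    have : ‖g₀ x‖ = ‖g x‖ := by rw [← hg₀U x hx]; rfl
    rw [this]
  refine ⟨⟨M⟩, M.subtypeL, S, g₀, hjle, fun z => hSf z, ⟨hdiff, himg ▸ hg.2⟩,
    congrArg sSup himg, ?_⟩
  intro x hx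
  refine κ.injective ?_
  rw [hfx x hx]
  have h1 : κ (S (g₀ x)) = T ((g₀ x : M) : H.α) := hSf (g₀ x)
  rw [h1, hg₀U x hx]

end AuxLemmas

set_option maxHeartbeats 1600000 in
/-- `(A ∘ H_v^∞)^inj = A^inj ∘ H_v^∞` with equal norms; in particular the
latter is injective. -/
theorem injective_hull_of_composition (A : OpAssignment.{u}) (hA : IsNormedOpIdeal A) :
    (∀ (E : BanachSp.{u}) (U : Set E.α) (v : E.α → ℝ), IsOpen U → IsWeight U v →
      ∀ (F : BanachSp.{u}) (f : E.α → F.α),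
        ((whInj (compWH A)).mem E U v F f ↔ (compWH (opInj A)).mem E U v F f) ∧
        ((whInj (compWH A)).mem E U v F f →
          (whInj (compWH A)).nrm E U v F f = (compWH (opInj A)).nrm E U v F f)) ∧
    WHInjective (compWH (opInj A)) := by
  classical
  have main : ∀ (E : BanachSp.{u}) (U : Set E.α) (v : E.α → ℝ), IsOpen U → IsWeight U v →
      ∀ (F : BanachSp.{u}) (f : E.α → F.α),
        ((whInj (compWH A)).mem E U v F f ↔ (compWH (opInj A)).mem E U v F f) ∧
        ((whInj (compWH A)).mem E U v F f →
          (whInj (compWH A)).nrm E U v F f = (compWH (opInj A)).nrm E U v F f) := by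
    intro E U v hU hv F f
    have fwd : (whInj (compWH A)).mem E U v F f → (compWH (opInj A)).mem E U v F f := by
      rintro ⟨hf, G, T, g, hT, hg, heq⟩
      obtain ⟨H₀, j, S, g₀, hj, hκS, hg₀, hnrm, hfeq⟩ :=
        exists_restriction hU F (LinfSp F.α) G (iotaIso F.α) T hg
          (f := f) (fun x hx => heq x hx)
      refine ⟨H₀, S, g₀, ?_, hg₀, hfeq⟩
      have hcomp := hA.comp_mem H₀ G (LinfSp F.α) (LinfSp F.α) j T
        (ContinuousLinearMap.id ℂ (Linf F.α)) hT
      have hEq : (iota F.α).comp S =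
          ((ContinuousLinearMap.id ℂ (Linf F.α)).comp T).comp j :=
        ContinuousLinearMap.ext fun z => hκS z
      show A.mem H₀ (LinfSp F.α) ((iota F.α).comp S)
      rw [hEq]
      exact hcomp.1
    have bwd : (compWH (opInj A)).mem E U v F f → (whInj (compWH A)).mem E U v F f := by
      rintro ⟨G, T, g, hT, hg, heq⟩
      exact ⟨hvBdd_of_comp hv T hg heq, G, (iota F.α).comp T, g, hT, hg,
        fun x hx => by show iota F.α (f x) = ((iota F.α).comp T) (g x); rw [heq x hx]; rfl⟩
    refine ⟨⟨fwd, bwd⟩, ?_⟩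
    intro hmem₁
    have hmem₂ := fwd hmem₁
    set S₁ := {r : ℝ | ∃ (G : BanachSp.{u}) (T : G.α →L[ℂ] Linf F.α) (g : E.α → G.α),
      A.mem G (LinfSp F.α) T ∧ HvBdd U v g ∧ (∀ x ∈ U, iota F.α (f x) = T (g x)) ∧
        r = A.nrm G (LinfSp F.α) T * hvNorm U v g} with hS₁def
    set S₂ := {r : ℝ | ∃ (G : BanachSp.{u}) (T : G.α →L[ℂ] F.α) (g : E.α → G.α),
      A.mem G (LinfSp F.α) ((iota F.α).comp T) ∧ HvBdd U v g ∧ (∀ x ∈ U, f x = T (g x)) ∧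
        r = A.nrm G (LinfSp F.α) ((iota F.α).comp T) * hvNorm U v g} with hS₂def
    have hne₁ : S₁.Nonempty := by
      obtain ⟨G, T, g, hT, hg, heq⟩ := hmem₁.2
      exact ⟨_, G, T, g, hT, hg, heq, rfl⟩
    have hne₂ : S₂.Nonempty := by
      obtain ⟨G, T, g, hT, hg, heq⟩ := hmem₂
      exact ⟨_, G, T, g, hT, hg, heq, rfl⟩
    have hbb₁ : BddBelow S₁ := ⟨0, by
      rintro r ⟨G, T, g, hT, hg, heq, rfl⟩
      exact mul_nonneg (hA.nrm_nonneg _ _ _ hT) (hvNorm_nonneg hv g)⟩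
    have hbb₂ : BddBelow S₂ := ⟨0, by
      rintro r ⟨G, T, g, hT, hg, heq, rfl⟩
      exact mul_nonneg (hA.nrm_nonneg _ _ _ hT) (hvNorm_nonneg hv g)⟩
    show sInf S₁ = sInf S₂
    refine le_antisymm (csInf_le_csInf hbb₁ hne₂ ?_) (le_csInf hne₁ ?_)
    · rintro r ⟨G, T, g, hT, hg, heq, rfl⟩
      exact ⟨G, (iota F.α).comp T, g, hT, hg,
        fun x hx => by show iota F.α (f x) = ((iota F.α).comp T) (g x); rw [heq x hx]; rfl, rfl⟩
    · rintro r ⟨G, T, g, hT, hg, heq, rfl⟩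
      obtain ⟨H₀, j, S, g₀, hj, hκS, hg₀, hnrm, hfeq⟩ :=
        exists_restriction hU F (LinfSp F.α) G (iotaIso F.α) T hg
          (f := f) (fun x hx => heq x hx)
      have hcomp := hA.comp_mem H₀ G (LinfSp F.α) (LinfSp F.α) j T
        (ContinuousLinearMap.id ℂ (Linf F.α)) hT
      have hEq : (iota F.α).comp S =
          ((ContinuousLinearMap.id ℂ (Linf F.α)).comp T).comp j :=
        ContinuousLinearMap.ext fun z => hκS z
      have hmemS : A.mem H₀ (LinfSp F.α) ((iota F.α).comp S) := by
        rw [hEq]; exact hcomp.1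
      have hleS : A.nrm H₀ (LinfSp F.α) ((iota F.α).comp S) ≤ A.nrm G (LinfSp F.α) T := by
        rw [hEq]
        refine hcomp.2.trans ?_
        calc ‖ContinuousLinearMap.id ℂ (Linf F.α)‖ * A.nrm G (LinfSp F.α) T * ‖j‖
            ≤ 1 * A.nrm G (LinfSp F.α) T * 1 :=
              mul_le_mul
                (mul_le_mul ContinuousLinearMap.norm_id_le le_rfl
                  (hA.nrm_nonneg _ _ _ hT) zero_le_one)
                hj (norm_nonneg _)
                (mul_nonneg zero_le_one (hA.nrm_nonneg _ _ _ hT))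
          _ = A.nrm G (LinfSp F.α) T := by ring
      have hmem2 : A.nrm H₀ (LinfSp F.α) ((iota F.α).comp S) * hvNorm U v g₀ ∈ S₂ :=
        ⟨H₀, S, g₀, hmemS, hg₀, hfeq, rfl⟩
      refine (csInf_le hbb₂ hmem2).trans ?_
      rw [hnrm]
      exact mul_le_mul_of_nonneg_right hleS (hvNorm_nonneg hv g)
  refine ⟨main, ?_⟩
  intro E U v hU hv F G f hf ι hmem
  obtain ⟨P, hP1, hP2⟩ := exists_extension F.α ((iotaIso G.α).comp ι) (iota F.α)
    (fun y => (norm_iota F.α y).le)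
  obtain ⟨Q, hQ1, hQ2⟩ := exists_extension G.α (iotaIso F.α)
    ((iota G.α).comp ι.toContinuousLinearMap)
    (fun y => by show ‖iota G.α (ι y)‖ ≤ ‖y‖; rw [norm_iota, ι.norm_map])
  obtain ⟨H, S, g, hS, hg, heq⟩ := hmem
  obtain ⟨H₀, j, S', g₀, hj, hκS', hg₀, hnrm, hfeq⟩ :=
    exists_restriction hU F G H ι S hg (f := f) (fun x hx => heq x hx)
  have hcomp := hA.comp_mem H₀ H (LinfSp G.α) (LinfSp F.α) j ((iota G.α).comp S) P hS
  have hEqS' : (iota F.α).comp S' = (P.comp ((iota G.α).comp S)).comp j :=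
    ContinuousLinearMap.ext fun z => by
      show iota F.α (S' z) = P (iota G.α (S (j z)))
      rw [← hκS' z]
      exact (hP2 (S' z)).symm
  have hmemS' : A.mem H₀ (LinfSp F.α) ((iota F.α).comp S') := by
    rw [hEqS']; exact hcomp.1
  have hmemf : (compWH (opInj A)).mem E U v F f := ⟨H₀, S', g₀, hmemS', hg₀, hfeq⟩
  refine ⟨hmemf, ?_⟩
  set T₁ := {r : ℝ | ∃ (H' : BanachSp.{u}) (S' : H'.α →L[ℂ] F.α) (g' : E.α → H'.α),
    A.mem H' (LinfSp F.α) ((iota F.α).comp S') ∧ HvBdd U v g' ∧ (∀ x ∈ U, f x = S' (g' x)) ∧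
      r = A.nrm H' (LinfSp F.α) ((iota F.α).comp S') * hvNorm U v g'} with hT₁def
  set T₂ := {r : ℝ | ∃ (H' : BanachSp.{u}) (S' : H'.α →L[ℂ] G.α) (g' : E.α → H'.α),
    A.mem H' (LinfSp G.α) ((iota G.α).comp S') ∧ HvBdd U v g' ∧ (∀ x ∈ U, ι (f x) = S' (g' x)) ∧
      r = A.nrm H' (LinfSp G.α) ((iota G.α).comp S') * hvNorm U v g'} with hT₂def
  have hneT₁ : T₁.Nonempty := ⟨_, H₀, S', g₀, hmemS', hg₀, hfeq, rfl⟩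
  have hneT₂ : T₂.Nonempty := ⟨_, H, S, g, hS, hg, heq, rfl⟩
  have hbbT₁ : BddBelow T₁ := ⟨0, by
    rintro r ⟨H', S'', g', hS'', hg', heq', rfl⟩
    exact mul_nonneg (hA.nrm_nonneg _ _ _ hS'') (hvNorm_nonneg hv g')⟩
  have hbbT₂ : BddBelow T₂ := ⟨0, by
    rintro r ⟨H', S'', g', hS'', hg', heq', rfl⟩
    exact mul_nonneg (hA.nrm_nonneg _ _ _ hS'') (hvNorm_nonneg hv g')⟩
  show sInf T₁ = sInf T₂
  refine le_antisymm (le_csInf hneT₂ ?_) (le_csInf hneT₁ ?_)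
  · rintro r ⟨H'', S₂, g₂, hS₂, hg₂, heq₂, rfl⟩
    obtain ⟨H₀', j', S₃, g₃, hj', hκS₃, hg₃, hnrm₃, hfeq₃⟩ :=
      exists_restriction hU F G H'' ι S₂ hg₂ (f := f) (fun x hx => heq₂ x hx)
    have hcomp3 := hA.comp_mem H₀' H'' (LinfSp G.α) (LinfSp F.α) j' ((iota G.α).comp S₂) P hS₂
    have hEq3 : (iota F.α).comp S₃ = (P.comp ((iota G.α).comp S₂)).comp j' :=
      ContinuousLinearMap.ext fun z => by
        show iota F.α (S₃ z) = P (iota G.α (S₂ (j' z)))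
        rw [← hκS₃ z]
        exact (hP2 (S₃ z)).symm
    have hmem3 : A.mem H₀' (LinfSp F.α) ((iota F.α).comp S₃) := by
      rw [hEq3]; exact hcomp3.1
    have hle3 : A.nrm H₀' (LinfSp F.α) ((iota F.α).comp S₃) ≤
        A.nrm H'' (LinfSp G.α) ((iota G.α).comp S₂) := by
      rw [hEq3]
      refine hcomp3.2.trans ?_
      calc ‖P‖ * A.nrm H'' (LinfSp G.α) ((iota G.α).comp S₂) * ‖j'‖
          ≤ 1 * A.nrm H'' (LinfSp G.α) ((iota G.α).comp S₂) * 1 :=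
            mul_le_mul (mul_le_mul hP1 le_rfl (hA.nrm_nonneg _ _ _ hS₂) zero_le_one) hj'
              (norm_nonneg _) (mul_nonneg zero_le_one (hA.nrm_nonneg _ _ _ hS₂))
        _ = A.nrm H'' (LinfSp G.α) ((iota G.α).comp S₂) := by ring
    have hmemT₁ : A.nrm H₀' (LinfSp F.α) ((iota F.α).comp S₃) * hvNorm U v g₃ ∈ T₁ :=
      ⟨H₀', S₃, g₃, hmem3, hg₃, hfeq₃, rfl⟩
    refine (csInf_le hbbT₁ hmemT₁).trans ?_
    rw [hnrm₃]
    exact mul_le_mul_of_nonneg_right hle3 (hvNorm_nonneg hv g₂)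
  · rintro r ⟨H', S'', g', hS'', hg', heq', rfl⟩
    have hcompQ := hA.comp_mem H' H' (LinfSp F.α) (LinfSp G.α)
      (ContinuousLinearMap.id ℂ H'.α) ((iota F.α).comp S'') Q hS''
    have hEq2 : (iota G.α).comp (ι.toContinuousLinearMap.comp S'') =
        (Q.comp ((iota F.α).comp S'')).comp (ContinuousLinearMap.id ℂ H'.α) :=
      ContinuousLinearMap.ext fun z => by
        show iota G.α (ι (S'' z)) = Q (iota F.α (S'' z))
        exact (hQ2 (S'' z)).symm
    have hmem2 : A.mem H' (LinfSp G.α) ((iota G.α).comp (ι.toContinuousLinearMap.comp S'')) := by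
      rw [hEq2]; exact hcompQ.1
    have hle2 : A.nrm H' (LinfSp G.α) ((iota G.α).comp (ι.toContinuousLinearMap.comp S'')) ≤
        A.nrm H' (LinfSp F.α) ((iota F.α).comp S'') := by
      rw [hEq2]
      refine hcompQ.2.trans ?_
      calc ‖Q‖ * A.nrm H' (LinfSp F.α) ((iota F.α).comp S'') * ‖ContinuousLinearMap.id ℂ H'.α‖
          ≤ 1 * A.nrm H' (LinfSp F.α) ((iota F.α).comp S'') * 1 :=
            mul_le_mul (mul_le_mul hQ1 le_rfl (hA.nrm_nonneg _ _ _ hS'') zero_le_one)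
              ContinuousLinearMap.norm_id_le (norm_nonneg _)
              (mul_nonneg zero_le_one (hA.nrm_nonneg _ _ _ hS''))
        _ = A.nrm H' (LinfSp F.α) ((iota F.α).comp S'') := by ring
    have hmemT₂ : A.nrm H' (LinfSp G.α) ((iota G.α).comp (ι.toContinuousLinearMap.comp S'')) *
        hvNorm U v g' ∈ T₂ :=
      ⟨H', ι.toContinuousLinearMap.comp S'', g', hmem2, hg',
        fun x hx => by rw [heq' x hx]; rfl, rfl⟩
    exact (csInf_le hbbT₂ hmemT₂).trans
      (mul_le_mul_of_nonneg_right hle2 (hvNorm_nonneg hv g'))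

end
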